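/- Let E be a topological graph and Y a closed subset of E^0_rg. Then the spaces E_Y^0 and E_Y^1 are locally compact Hausdorff, the map d_Y : E_Y^1 → E_Y^0 is a local homeomorphism, and the map r_Y : E_Y^1 → E_Y^0 is continuous; hence E_Y = (E_Y^0, E_Y^1, d_Y, r_Y) is a topological graph. -/

import Mathlib

open Set Filter OnePoint

namespace TopGraphAux

/-- `E⁰_sce`: the open set of sources of a topological graph. -/
def graphSce {E0 E1 : Type*} [TopologicalSpace E0] (r : E1 → E0) : Set E0 :=
  (closure (Set.range r))ᶜ

/-- `E⁰_fin`: vertices having a neighborhood whose `r`-preimage is compact. -/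
def graphFin {E0 E1 : Type*} [TopologicalSpace E0] [TopologicalSpace E1] (r : E1 → E0) :
    Set E0 :=
  {v | ∃ V ∈ nhds v, IsCompact (r ⁻¹' V)}

/-- `E⁰_rg`: the open set of regular vertices of a topological graph. -/
def graphRg {E0 E1 : Type*} [TopologicalSpace E0] [TopologicalSpace E1] (r : E1 → E0) :
    Set E0 :=
  graphFin r \ closure (graphSce r)

/-- A factor map from the topological graph `F = (F0, F1, dF, rF)` to the topological graph
`E = (E0, E1, dE, rE)`: a pair of continuous maps between one-point compactifications sending
`∞` to `∞`, intertwining range and domain maps, and with the unique edge-lifting property. -/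
structure IsFactorMap {E0 E1 F0 F1 : Type*}
    [TopologicalSpace E0] [TopologicalSpace E1] [TopologicalSpace F0] [TopologicalSpace F1]
    (dE rE : E1 → E0) (dF rF : F1 → F0)
    (m0 : OnePoint F0 → OnePoint E0) (m1 : OnePoint F1 → OnePoint E1) : Prop where
  continuous_m0 : Continuous m0
  continuous_m1 : Continuous m1
  map_infty0 : m0 ∞ = ∞
  map_infty1 : m1 ∞ = ∞
  compat : ∀ (e : F1) (e' : E1), m1 ↑e = ↑e' →
    (↑(rE e') : OnePoint E0) = m0 ↑(rF e) ∧ (↑(dE e') : OnePoint E0) = m0 ↑(dF e)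
  lift : ∀ (e' : E1) (v : F0), (↑(dE e') : OnePoint E0) = m0 ↑v →
    ∃! e : F1, m1 ↑e = (↑e' : OnePoint E1) ∧ dF e = v

/-- Regularity of a factor map: every vertex mapping to a regular vertex receives an edge,
and all edges it receives are mapped to genuine edges. -/
def IsRegularFactorMap {E0 E1 F0 F1 : Type*}
    [TopologicalSpace E0] [TopologicalSpace E1] [TopologicalSpace F0] [TopologicalSpace F1]
    (rE : E1 → E0) (rF : F1 → F0)
    (m0 : OnePoint F0 → OnePoint E0) (m1 : OnePoint F1 → OnePoint E1) : Prop :=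
  ∀ (v : F0) (w : E0), m0 ↑v = ↑w → w ∈ graphRg rE →
    (∃ e : F1, rF e = v) ∧ ∀ e : F1, rF e = v → ∃ e' : E1, m1 ↑e = ↑e'

/-- `f` restricts to a homeomorphism from `U` onto `V`. -/
def IsHomeoOn {X Y : Type*} [TopologicalSpace X] [TopologicalSpace Y]
    (f : X → Y) (U : Set X) (V : Set Y) : Prop :=
  ∃ h : U ≃ₜ V, ∀ x : U, (h x : Y) = f (x : X)

/-- Extension of a map `A → OnePoint B` to the one-point compactification, sending `∞` to `∞`. -/
def onePointLift {A B : Type*} (f : A → OnePoint B) : OnePoint A → OnePoint B :=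
  fun x => Option.elim x ∞ f

/-- The relation identifying the copy in `S` of each point of `B ⊆ S` with the corresponding
point of `X`. -/
def glueRel {X : Type*} (S B : Set X) : (X ⊕ ↥S) → (X ⊕ ↥S) → Prop :=
  fun a b => ∃ x : ↥S, (x : X) ∈ B ∧
    ((a = Sum.inl ↑x ∧ b = Sum.inr x) ∨ (a = Sum.inr x ∧ b = Sum.inl ↑x))

/-- The space `X ⨿_B S` obtained from `X ⊔ S` by identifying the two copies of each point
of `B ⊆ S ⊆ X`. -/
def Glue (X : Type*) (S B : Set X) : Type _ := Quot (glueRel S B)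

instance {X : Type*} [TopologicalSpace X] (S B : Set X) : TopologicalSpace (Glue X S B) :=
  inferInstanceAs (TopologicalSpace (Quot _))

/-- The canonical inclusion `X → X ⨿_B S`. -/
def Glue.inl {X : Type*} {S B : Set X} (x : X) : Glue X S B := Quot.mk _ (Sum.inl x)

/-- The inclusion of the extra copy `S → X ⨿_B S`. -/
def Glue.inr {X : Type*} {S B : Set X} (x : ↥S) : Glue X S B := Quot.mk _ (Sum.inr x)

/-- The extension `d_Y` of the domain map `d` to the graph `E_Y`. -/
def glueD {E0 E1 : Type*} [TopologicalSpace E0] (d : E1 → E0) (Y : Set E0) :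
    Glue E1 (d ⁻¹' closure Y) (d ⁻¹' (closure Y \ Y)) → Glue E0 (closure Y) (closure Y \ Y) :=
  Quot.lift
    (Sum.elim (fun e => Glue.inl (d e)) (fun e => Glue.inr ⟨d e.1, e.2⟩))
    (by
      rintro a b ⟨x, hx, (⟨rfl, rfl⟩ | ⟨rfl, rfl⟩)⟩
      · exact Quot.sound ⟨⟨d x.1, x.2⟩, hx, Or.inl ⟨rfl, rfl⟩⟩
      · exact (Quot.sound ⟨⟨d x.1, x.2⟩, hx, Or.inl ⟨rfl, rfl⟩⟩).symm)

/-- The extension `r_Y` of the range map `r` to the graph `E_Y`. -/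
def glueR {E0 E1 : Type*} [TopologicalSpace E0] (d r : E1 → E0) (Y : Set E0) :
    Glue E1 (d ⁻¹' closure Y) (d ⁻¹' (closure Y \ Y)) → Glue E0 (closure Y) (closure Y \ Y) :=
  Quot.lift (Sum.elim (fun e => Glue.inl (r e)) (fun e => Glue.inl (r e.1)))
    (by rintro a b ⟨x, hx, (⟨rfl, rfl⟩ | ⟨rfl, rfl⟩)⟩ <;> rfl)

/-- The projection from the glued space back onto the original space. -/
def glueProj {X : Type*} (S B : Set X) : Glue X S B → X :=
  Quot.lift (Sum.elim id Subtype.val)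
    (by rintro a b ⟨x, hx, (⟨rfl, rfl⟩ | ⟨rfl, rfl⟩)⟩ <;> rfl)

/-- A point of the projective limit `E^i = Ẽ^i \ {∞}`: a compatible thread of points of the
one-point compactifications, not all equal to `∞`. -/
structure LimPt {Λ : Type*} [Preorder Λ] (X : Λ → Type*)
    (m : ∀ ⦃l l' : Λ⦄, l ≤ l' → OnePoint (X l') → OnePoint (X l)) where
  pt : ∀ l, OnePoint (X l)
  compat : ∀ ⦃l l' : Λ⦄ (h : l ≤ l'), m h (pt l') = pt l
  exists_ne_infty : ∃ l, pt l ≠ ∞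

instance {Λ : Type*} [Preorder Λ] (X : Λ → Type*) [∀ l, TopologicalSpace (X l)]
    (m : ∀ ⦃l l' : Λ⦄, l ≤ l' → OnePoint (X l') → OnePoint (X l)) :
    TopologicalSpace (LimPt X m) :=
  TopologicalSpace.induced LimPt.pt inferInstance

/-- Topological freeness: the set of base points of loops without entrances has empty
interior. -/
def IsTopologicallyFree {E0 E1 : Type*} [TopologicalSpace E0] (d r : E1 → E0) : Prop :=
  interior {v : E0 | ∃ (n : ℕ) (hn : 0 < n) (e : Fin n → E1),
      (∀ k : Fin n, d (e k) = r (e ⟨(k.1 + 1) % n, Nat.mod_lt _ hn⟩)) ∧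
      (∀ (k : Fin n) (e' : E1), r e' = r (e k) → e' = e k) ∧
      r (e ⟨0, hn⟩) = v} = ∅

open scoped Classical in
/-- Partial iteration of a partially defined map `σ` with domain `W`:
`sgdsIter σ n x = some y` iff `x ∈ dom (σ^n)` and `σ^n x = y`. -/
noncomputable def sgdsIter {X : Type*} {W : Set X} (σ : ↥W → X) : ℕ → X → Option X
  | 0, x => Option.some x
  | n + 1, x => if h : x ∈ W then sgdsIter σ n (σ ⟨x, h⟩) else none


set_option linter.unusedSectionVars false
set_option linter.unusedVariables false

section GlueLemmas
variable {X : Type*} [TopologicalSpace X] {S B : Set X}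

theorem continuous_glue_inl : Continuous (Glue.inl : X → Glue X S B) :=
  continuous_quot_mk.comp continuous_inl

theorem continuous_glue_inr : Continuous (Glue.inr : ↥S → Glue X S B) :=
  continuous_quot_mk.comp continuous_inr

/-- A complete invariant for glue classes. -/
def glueInv (S B : Set X) : Glue X S B → X × Prop :=
  Quot.lift (Sum.elim (fun x => (x, False)) (fun s => ((s : X), (s : X) ∉ B)))
    (by rintro a b ⟨x, hx, (⟨rfl, rfl⟩ | ⟨rfl, rfl⟩)⟩ <;>
        simp [Prod.ext_iff, eq_iff_iff, hx])

@[simp] theorem glueInv_inl (x : X) : glueInv S B (Glue.inl x) = (x, False) := rfl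
@[simp] theorem glueInv_inr (s : ↥S) :
    glueInv S B (Glue.inr s) = ((s : X), (s : X) ∉ B) := rfl

theorem glue_inr_eq_inl {s : ↥S} (hs : (s : X) ∈ B) :
    (Glue.inr s : Glue X S B) = Glue.inl (s : X) :=
  Quot.sound ⟨s, hs, Or.inr ⟨rfl, rfl⟩⟩

theorem glue_cases (p : Glue X S B) :
    (∃ x : X, p = Glue.inl x) ∨ ∃ s : ↥S, (s : X) ∉ B ∧ p = Glue.inr s := by
  induction p using Quot.ind with | _ a => ?_
  rcases a with x | s
  · exact Or.inl ⟨x, rfl⟩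
  · by_cases hs : (s : X) ∈ B
    · exact Or.inl ⟨s, (glue_inr_eq_inl hs).symm ▸ rfl⟩
    · exact Or.inr ⟨s, hs, rfl⟩

theorem glue_inl_injective : Function.Injective (Glue.inl : X → Glue X S B) :=
  fun _ _ h => congrArg (fun p => (glueInv S B p).1) h

theorem glue_inr_injective : Function.Injective (Glue.inr : ↥S → Glue X S B) :=
  fun _ _ h => Subtype.ext (congrArg (fun p => (glueInv S B p).1) h)

theorem glue_inl_eq_inr {x : X} {s : ↥S} (h : Glue.inl x = (Glue.inr s : Glue X S B)) :
    x = (s : X) ∧ (s : X) ∈ B := by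
  have h1 : x = (s : X) := congrArg (fun p => (glueInv S B p).1) h
  have h2 : False = ((s : X) ∉ B) := congrArg (fun p => (glueInv S B p).2) h
  exact ⟨h1, not_not.mp (by rw [← h2]; exact not_false)⟩

theorem glueInv_injective : Function.Injective (glueInv S B) := by
  intro p q h
  rcases glue_cases p with ⟨x, rfl⟩ | ⟨s, hs, rfl⟩ <;>
    rcases glue_cases q with ⟨y, rfl⟩ | ⟨t, ht, rfl⟩
  · exact congrArg Glue.inl (congrArg Prod.fst h)
  · have h2 : ((t : X) ∉ B) = False := congrArg Prod.snd h.symm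
    exact (h2 ▸ ht).elim
  · have h2 : ((s : X) ∉ B) = False := congrArg Prod.snd h
    exact (h2 ▸ hs).elim
  · exact congrArg Glue.inr (Subtype.ext (congrArg Prod.fst h))

theorem isOpen_glue_iff {G : Set (Glue X S B)} :
    IsOpen G ↔ IsOpen {x : X | Glue.inl x ∈ G} ∧ IsOpen {s : ↥S | Glue.inr s ∈ G} :=
  isOpen_coinduced.trans isOpen_sum_iff


/-- The basic open set of the glue space determined by an open `U ⊆ X`. -/
def glueO (S B : Set X) (U : Set X) : Set (Glue X S B) :=
  Glue.inl '' U ∪ Glue.inr '' ((↑) ⁻¹' U)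

theorem inl_mem_glueO {U : Set X} {x : X} :
    Glue.inl x ∈ glueO S B U ↔ x ∈ U := by
  constructor
  · rintro (⟨y, hy, hxy⟩ | ⟨s, hs, hsx⟩)
    · rwa [← glue_inl_injective hxy]
    · obtain ⟨rfl, -⟩ := glue_inl_eq_inr hsx.symm
      exact hs
  · exact fun h => Or.inl (mem_image_of_mem _ h)

theorem inr_mem_glueO {U : Set X} {s : ↥S} :
    Glue.inr s ∈ glueO S B U ↔ (s : X) ∈ U := by
  constructor
  · rintro (⟨y, hy, hxy⟩ | ⟨t, ht, hts⟩)
    · obtain ⟨rfl, -⟩ := glue_inl_eq_inr hxy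
      exact hy
    · rwa [← glue_inr_injective hts]
  · exact fun h => Or.inr (mem_image_of_mem _ h)

theorem isOpen_glueO {U : Set X} (hU : IsOpen U) : IsOpen (glueO S B U) := by
  rw [isOpen_glue_iff]
  constructor
  · convert hU using 1
    ext x; exact inl_mem_glueO
  · convert hU.preimage (continuous_subtype_val (p := (· ∈ S))) using 1
    ext s; exact inr_mem_glueO

/-- The extra-copy open set determined by an open `T` disjoint from `B`. -/
def glueYO (S B : Set X) (T : Set X) : Set (Glue X S B) :=
  Glue.inr '' ((↑) ⁻¹' T)

theorem inr_mem_glueYO {T : Set X} {s : ↥S} :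
    Glue.inr s ∈ glueYO S B T ↔ (s : X) ∈ T := by
  constructor
  · rintro ⟨t, ht, hts⟩
    rwa [← glue_inr_injective hts]
  · exact fun h => mem_image_of_mem _ h

theorem inl_not_mem_glueYO {T : Set X} (hTB : T ∩ B = ∅) {x : X} :
    Glue.inl x ∉ glueYO S B T := by
  rintro ⟨t, ht, hts⟩
  obtain ⟨-, htB⟩ := glue_inl_eq_inr hts.symm
  have h : (t : X) ∈ T ∩ B := ⟨ht, htB⟩
  rw [hTB] at h
  exact h

theorem isOpen_glueYO {T : Set X} (hT : IsOpen T) (hTB : T ∩ B = ∅) :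
    IsOpen (glueYO S B T) := by
  rw [isOpen_glue_iff]
  constructor
  · convert isOpen_empty using 1
    ext x
    simp only [mem_setOf_eq, mem_empty_iff_false, iff_false]
    exact inl_not_mem_glueYO hTB
  · convert hT.preimage (continuous_subtype_val (p := (· ∈ S))) using 1
    ext s; exact inr_mem_glueYO

/-- The closed-copy open set: `inl` of an open set disjoint from `B`. -/
theorem inr_not_mem_inl_image {U : Set X} (hUB : U ∩ B = ∅) {s : ↥S} :
    Glue.inr s ∉ (Glue.inl '' U : Set (Glue X S B)) := by
  rintro ⟨y, hy, hys⟩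
  obtain ⟨rfl, hB2⟩ := glue_inl_eq_inr hys
  have h : (s : X) ∈ U ∩ B := ⟨hy, hB2⟩
  rw [hUB] at h
  exact h

theorem isOpen_inl_image {U : Set X} (hU : IsOpen U) (hUB : U ∩ B = ∅) :
    IsOpen (Glue.inl '' U : Set (Glue X S B)) := by
  rw [isOpen_glue_iff]
  constructor
  · convert hU using 1
    ext x
    exact ⟨fun ⟨y, hy, h⟩ => (glue_inl_injective h) ▸ hy, fun h => mem_image_of_mem _ h⟩
  · convert isOpen_empty using 1
    ext s
    simp only [mem_setOf_eq, mem_empty_iff_false, iff_false]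
    exact inr_not_mem_inl_image hUB

theorem glue_t2 [T2Space X] (hB : IsClosed B) : T2Space (Glue X S B) := by
  have sep_ir : ∀ (x : X) (s : ↥S), (s : X) ∉ B → Glue.inl x ≠ (Glue.inr s : Glue X S B) →
      ∃ u v : Set (Glue X S B), IsOpen u ∧ IsOpen v ∧ Glue.inl x ∈ u ∧ Glue.inr s ∈ v ∧
        Disjoint u v := by
    intro x s hs hne
    by_cases hxs : x = (s : X)
    · subst hxs
      refine ⟨Glue.inl '' Bᶜ, glueYO S B Bᶜ, isOpen_inl_image hB.isOpen_compl (by simp),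
        isOpen_glueYO hB.isOpen_compl (by simp), mem_image_of_mem _ hs,
        inr_mem_glueYO.mpr hs, ?_⟩
      rw [disjoint_left]
      rintro p ⟨y, hy, rfl⟩ hp
      exact inl_not_mem_glueYO (by simp) hp
    · obtain ⟨U, V, hU, hV, hxU, hsV, hUV⟩ := t2_separation hxs
      refine ⟨glueO S B U, glueYO S B (V ∩ Bᶜ), isOpen_glueO hU,
        isOpen_glueYO (hV.inter hB.isOpen_compl) (by simp [inter_assoc]),
        inl_mem_glueO.mpr hxU, inr_mem_glueYO.mpr ⟨hsV, hs⟩, ?_⟩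
      rw [disjoint_left]
      rintro p hpU ⟨t, ⟨htV, htB⟩, rfl⟩
      exact disjoint_left.mp hUV (inr_mem_glueO.mp hpU) htV
  constructor
  intro p q hpq
  rcases glue_cases p with ⟨x, rfl⟩ | ⟨s, hs, rfl⟩ <;>
    rcases glue_cases q with ⟨y, rfl⟩ | ⟨t, ht, rfl⟩
  · have hxy : x ≠ y := fun h => hpq (congrArg _ h)
    obtain ⟨U, V, hU, hV, hxU, hyV, hUV⟩ := t2_separation hxy
    refine ⟨glueO S B U, glueO S B V, isOpen_glueO hU, isOpen_glueO hV,
      inl_mem_glueO.mpr hxU, inl_mem_glueO.mpr hyV, ?_⟩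
    rw [disjoint_left]
    intro p hpU hpV
    rcases glue_cases p with ⟨z, rfl⟩ | ⟨u, hu, rfl⟩
    · exact disjoint_left.mp hUV (inl_mem_glueO.mp hpU) (inl_mem_glueO.mp hpV)
    · exact disjoint_left.mp hUV (inr_mem_glueO.mp hpU) (inr_mem_glueO.mp hpV)
  · exact sep_ir x t ht hpq
  · obtain ⟨u, v, hu, hv, hyu, hsv, huv⟩ := sep_ir y s hs hpq.symm
    exact ⟨v, u, hv, hu, hsv, hyu, huv.symm⟩
  · have hst : (s : X) ≠ (t : X) := fun h => hpq (congrArg _ (Subtype.ext h))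
    obtain ⟨U, V, hU, hV, hsU, htV, hUV⟩ := t2_separation hst
    refine ⟨glueYO S B (U ∩ Bᶜ), glueYO S B (V ∩ Bᶜ),
      isOpen_glueYO (hU.inter hB.isOpen_compl) (by simp [inter_assoc]),
      isOpen_glueYO (hV.inter hB.isOpen_compl) (by simp [inter_assoc]),
      inr_mem_glueYO.mpr ⟨hsU, hs⟩, inr_mem_glueYO.mpr ⟨htV, ht⟩, ?_⟩
    rw [disjoint_left]
    rintro p hpU ⟨u, ⟨huV, -⟩, rfl⟩
    exact disjoint_left.mp hUV (inr_mem_glueYO.mp hpU).1 huV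

theorem glue_wlc [LocallyCompactSpace X] (hS : IsClosed S) (hB : IsClosed B) :
    WeaklyLocallyCompactSpace (Glue X S B) := by
  constructor
  intro p
  rcases glue_cases p with ⟨x, rfl⟩ | ⟨s, hs, rfl⟩
  · obtain ⟨K, hKc, hKn⟩ := exists_compact_mem_nhds x
    have hKS : IsCompact ((↑) ⁻¹' K : Set ↥S) :=
      hS.isClosedEmbedding_subtypeVal.isCompact_preimage hKc
    refine ⟨Glue.inl '' K ∪ Glue.inr '' ((↑) ⁻¹' K),
      (hKc.image continuous_glue_inl).union (hKS.image continuous_glue_inr), ?_⟩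
    rw [mem_nhds_iff]
    refine ⟨glueO S B (interior K), ?_, isOpen_glueO isOpen_interior,
      inl_mem_glueO.mpr (mem_interior_iff_mem_nhds.mpr hKn)⟩
    exact union_subset_union (image_mono interior_subset)
      (image_mono (preimage_mono interior_subset))
  · obtain ⟨K, hKc, hxK, hKB⟩ := exists_compact_subset hB.isOpen_compl hs
    have hKS : IsCompact ((↑) ⁻¹' K : Set ↥S) :=
      hS.isClosedEmbedding_subtypeVal.isCompact_preimage hKc
    refine ⟨Glue.inr '' ((↑) ⁻¹' K), hKS.image continuous_glue_inr, ?_⟩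
    rw [mem_nhds_iff]
    refine ⟨glueYO S B (interior K), ?_, isOpen_glueYO isOpen_interior ?_,
      inr_mem_glueYO.mpr hxK⟩
    · exact image_mono (preimage_mono interior_subset)
    · apply eq_empty_of_subset_empty
      intro z hz
      exact absurd (hKB (interior_subset hz.1)) (not_not.mpr hz.2)

end GlueLemmas

section GlueD
variable {E0 E1 : Type*} [TopologicalSpace E0] [TopologicalSpace E1] {d r : E1 → E0}
  {Y : Set E0}

theorem continuous_glueD (hd : Continuous d) (Y : Set E0) : Continuous (glueD d Y) := by
  apply isQuotientMap_quot_mk.continuous_iff.mpr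
  exact Continuous.sumElim (continuous_glue_inl.comp hd)
    (continuous_glue_inr.comp (Continuous.subtype_mk (hd.comp continuous_subtype_val) _))

theorem continuous_glueR (hd : Continuous d) (hr : Continuous r) (Y : Set E0) :
    Continuous (glueR d r Y) := by
  apply isQuotientMap_quot_mk.continuous_iff.mpr
  exact Continuous.sumElim (continuous_glue_inl.comp hr)
    (continuous_glue_inl.comp (hr.comp continuous_subtype_val))

theorem glueD_isOpenMap (hd : IsLocalHomeomorph d) (Y : Set E0) :
    IsOpenMap (glueD d Y) := by
  intro G hG
  obtain ⟨hGX, hGS⟩ := isOpen_glue_iff.mp hG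
  rw [isOpen_glue_iff]
  constructor
  · convert hd.isOpenMap _ hGX using 1
    ext v
    constructor
    · rintro ⟨p, hpG, hp⟩
      induction p using Quot.ind with | _ a => ?_
      rcases a with e | ⟨e, he⟩
      · exact ⟨e, hpG, glue_inl_injective hp⟩
      · obtain ⟨hv, hvB⟩ := glue_inl_eq_inr (hp.symm :
          Glue.inl v = Glue.inr (⟨d e, he⟩ : ↥(closure Y)))
        have heB : e ∈ d ⁻¹' (closure Y \ Y) := hvB
        have heq : (Glue.inr ⟨e, he⟩ :
            Glue E1 (d ⁻¹' closure Y) (d ⁻¹' (closure Y \ Y))) = Glue.inl e :=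
          glue_inr_eq_inl heB
        refine ⟨e, ?_, hv.symm⟩
        show Glue.inl e ∈ G
        rw [← heq]; exact hpG
    · rintro ⟨e, he, rfl⟩
      exact ⟨Glue.inl e, he, rfl⟩
  · obtain ⟨Ω, hΩ, hΩeq⟩ := isOpen_induced_iff.mp hGS
    have key : {t : ↥(closure Y) | Glue.inr t ∈ glueD d Y '' G} = (↑) ⁻¹' (d '' Ω) := by
      ext t
      constructor
      · rintro ⟨p, hpG, hp⟩
        induction p using Quot.ind with | _ a => ?_
        rcases a with e | ⟨e, he⟩
        · obtain ⟨hv, hvB⟩ := glue_inl_eq_inr (hp :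
            Glue.inl (d e) = Glue.inr t)
          have heB : e ∈ d ⁻¹' (closure Y \ Y) := by
            show d e ∈ closure Y \ Y
            rw [hv]; exact hvB
          have he' : e ∈ d ⁻¹' closure Y := heB.1
          have heq : (Glue.inr ⟨e, he'⟩ :
              Glue E1 (d ⁻¹' closure Y) (d ⁻¹' (closure Y \ Y))) = Glue.inl e :=
            glue_inr_eq_inl heB
          have hmem : (⟨e, he'⟩ : ↥(d ⁻¹' closure Y)) ∈ (↑) ⁻¹' Ω := by
            rw [hΩeq]
            show Glue.inr ⟨e, he'⟩ ∈ G
            rw [heq]; exact hpG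
          exact ⟨e, hmem, hv⟩
        · have ht : (⟨d e, he⟩ : ↥(closure Y)) = t := glue_inr_injective hp
          have hmem : (⟨e, he⟩ : ↥(d ⁻¹' closure Y)) ∈ (↑) ⁻¹' Ω := by
            rw [hΩeq]; exact hpG
          exact ⟨e, hmem, by rw [← ht]⟩
      · rintro ⟨e, heΩ, hde⟩
        have he' : e ∈ d ⁻¹' closure Y := by
          show d e ∈ closure Y
          rw [hde]; exact t.2
        have hmem : (⟨e, he'⟩ : ↥(d ⁻¹' closure Y)) ∈ {s | Glue.inr s ∈ G} := by
          rw [← hΩeq]; exact heΩ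
        exact ⟨Glue.inr ⟨e, he'⟩, hmem, congrArg Glue.inr (Subtype.ext hde)⟩
    rw [key]
    exact (hd.isOpenMap Ω hΩ).preimage continuous_subtype_val
end GlueD

section GlueD2
variable {E0 E1 : Type*} [TopologicalSpace E0] [TopologicalSpace E1] {d r : E1 → E0}
  {Y : Set E0}

theorem glueInv_glueD (p : Glue E1 (d ⁻¹' closure Y) (d ⁻¹' (closure Y \ Y))) :
    glueInv _ _ (glueD d Y p) =
      (d (glueInv _ _ p).1, (glueInv _ _ p).2) := by
  induction p using Quot.ind with | _ a => ?_
  rcases a with e | ⟨e, he⟩ <;> rfl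

theorem glueInv_fst_mem {X : Type*} [TopologicalSpace X] {S B U : Set X}
    {p : Glue X S B} (hp : p ∈ glueO S B U) : (glueInv S B p).1 ∈ U := by
  rcases glue_cases p with ⟨x, rfl⟩ | ⟨s, hs, rfl⟩
  · exact inl_mem_glueO.mp hp
  · exact inr_mem_glueO.mp hp

theorem glueD_injOn {U : Set E1} (hU : Set.InjOn d U) :
    Set.InjOn (glueD d Y) (glueO (d ⁻¹' closure Y) (d ⁻¹' (closure Y \ Y)) U) := by
  intro p hp q hq h
  apply glueInv_injective
  have h1 := congrArg (glueInv (closure Y) (closure Y \ Y)) h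
  rw [glueInv_glueD, glueInv_glueD] at h1
  have hfst := hU (glueInv_fst_mem hp) (glueInv_fst_mem hq) (congrArg Prod.fst h1)
  have hsnd := congrArg Prod.snd h1
  exact Prod.ext_iff.mpr ⟨hfst, hsnd⟩

theorem isLocalHomeomorph_glueD (hd : IsLocalHomeomorph d) (Y : Set E0) :
    IsLocalHomeomorph (glueD d Y) := by
  rw [isLocalHomeomorph_iff_isOpenEmbedding_restrict]
  intro p
  obtain ⟨e, hpe⟩ : ∃ e : E1, ∀ U : Set E1, e ∈ U →
      p ∈ glueO (d ⁻¹' closure Y) (d ⁻¹' (closure Y \ Y)) U := by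
    rcases glue_cases p with ⟨x, rfl⟩ | ⟨s, hs, rfl⟩
    · exact ⟨x, fun U hU => inl_mem_glueO.mpr hU⟩
    · exact ⟨↑s, fun U hU => inr_mem_glueO.mpr hU⟩
  obtain ⟨φ, heφ, hdφ⟩ := hd e
  refine ⟨glueO _ _ φ.source, (isOpen_glueO φ.open_source).mem_nhds (hpe _ heφ), ?_⟩
  apply Topology.IsOpenEmbedding.of_continuous_injective_isOpenMap
  · exact (continuous_glueD hd.continuous Y).comp continuous_subtype_val
  · exact Set.injOn_iff_injective.mp (glueD_injOn (by rw [hdφ]; exact φ.injOn))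
  · intro V hV
    rw [Set.restrict_eq, image_comp]
    exact glueD_isOpenMap hd Y _ ((isOpen_glueO φ.open_source).isOpenMap_subtype_val V hV)

end GlueD2


theorem isOpen_graphFin {E0 E1 : Type*} [TopologicalSpace E0] [TopologicalSpace E1]
    (r : E1 → E0) : IsOpen (graphFin r) := by
  rw [isOpen_iff_mem_nhds]
  rintro v ⟨V, hV, hc⟩
  exact mem_of_superset (interior_mem_nhds.mpr hV)
    (fun w hw => ⟨V, mem_nhds_iff.mpr ⟨interior V, interior_subset, isOpen_interior, hw⟩, hc⟩)


/-- For a topological graph `E` and a closed subset `Y` of `E⁰_rg`,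
the spaces `E_Y⁰` and `E_Y¹` are locally compact Hausdorff, `d_Y` is a local homeomorphism
and `r_Y` is continuous; hence `E_Y` is a topological graph. -/
theorem statement6
    {E0 E1 : Type*} [TopologicalSpace E0] [TopologicalSpace E1]
    [T2Space E0] [T2Space E1] [LocallyCompactSpace E0] [LocallyCompactSpace E1]
    (d r : E1 → E0) (hd : IsLocalHomeomorph d) (hr : Continuous r)
    (Y : Set E0) (hY : Y ⊆ graphRg r) (hYc : closure Y ∩ graphRg r = Y) :
    T2Space (Glue E0 (closure Y) (closure Y \ Y)) ∧
      LocallyCompactSpace (Glue E0 (closure Y) (closure Y \ Y)) ∧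
      T2Space (Glue E1 (d ⁻¹' closure Y) (d ⁻¹' (closure Y \ Y))) ∧
      LocallyCompactSpace (Glue E1 (d ⁻¹' closure Y) (d ⁻¹' (closure Y \ Y))) ∧
      IsLocalHomeomorph (glueD d Y) ∧
      Continuous (glueR d r Y) := by
  have hRg : IsOpen (graphRg r) := (isOpen_graphFin r).sdiff isClosed_closure
  have hB : IsClosed (closure Y \ Y) := by
    nth_rewrite 2 [← hYc]
    rw [diff_self_inter]
    exact isClosed_closure.sdiff hRg
  have hS : IsClosed (closure Y) := isClosed_closure
  have hS1 : IsClosed (d ⁻¹' closure Y) := hS.preimage hd.continuous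
  have hB1 : IsClosed (d ⁻¹' (closure Y \ Y)) := hB.preimage hd.continuous
  haveI t20 := glue_t2 (S := closure Y) hB
  haveI t21 := glue_t2 (S := d ⁻¹' closure Y) hB1
  haveI w0 := glue_wlc hS hB
  haveI w1 := glue_wlc hS1 hB1
  exact ⟨t20, inferInstance, t21, inferInstance, isLocalHomeomorph_glueD hd Y,
    continuous_glueR hd.continuous hr Y⟩


end TopGraphAux
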